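/- arXiv:2202.12697 — 2 statements merged into one kernel-verified Lean document; each statement's English description precedes it below -/
import Mathlib

section
/- For all parameters A, B, C ∈ ℂ with C ≠ 0 and (C;q)_n ≠ 0 for all n, and all x, y ∈ ℂ with |x| < 1 and |y| < 1, the bibasic Humbert function satisfies (1−A)·Φ₁(qA,B;qC;q,q₁;x,y) = (1−A/C)·Φ₁(A,B;qC;q,q₁;x,y) + (A/C)(1−C)·Φ₁(A,B;C;q,q₁;x,y). (Equation (2.5), with C playing the role of q^{c−1}, so qC = q^c; in the paper's notation q^{a+1−c} = A/C here.) -/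
open Complex

/-- The q-shifted factorial (z;q)_n = prod_{r=0}^{n-1} (1 - z q^r). -/
noncomputable def qPoch (q z : ℂ) (n : ℕ) : ℂ :=
  ∏ r ∈ Finset.range n, (1 - z * q ^ r)

lemma qPoch_succ (q z : ℂ) (n : ℕ) : qPoch q z (n+1) = qPoch q z n * (1 - z * q ^ n) :=
  Finset.prod_range_succ _ _

lemma qPoch_shift (q z : ℂ) (n : ℕ) : qPoch q z (n+1) = (1 - z) * qPoch q (q*z) n := by
  unfold qPoch
  rw [Finset.prod_range_succ']
  simp only [pow_zero, mul_one]
  rw [mul_comm]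
  congr 1
  refine Finset.prod_congr rfl fun i _ => ?_
  ring

noncomputable def Complex.abs : AbsoluteValue ℂ ℝ where
  toFun := fun z => ‖z‖
  map_mul' := norm_mul
  nonneg' := norm_nonneg
  eq_zero' := fun _ => norm_eq_zero
  add_le' := norm_add_le

lemma Complex.norm_eq_abs (z : ℂ) : ‖z‖ = Complex.abs z := rfl

lemma prod_one_sub_ge (t : ℕ → ℝ) (h0 : ∀ i, 0 ≤ t i) (h1 : ∀ i, t i ≤ 1) (m : ℕ) :
    1 - ∑ i ∈ Finset.range m, t i ≤ ∏ i ∈ Finset.range m, (1 - t i) := by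
  induction m with
  | zero => simp
  | succ m ih =>
    rw [Finset.sum_range_succ, Finset.prod_range_succ]
    have hp : (0:ℝ) ≤ ∏ i ∈ Finset.range m, (1 - t i) :=
      Finset.prod_nonneg fun i _ => by linarith [h1 i]
    have := h0 m
    have := h1 m
    have hs : (0:ℝ) ≤ ∑ i ∈ Finset.range m, t i :=
      Finset.sum_nonneg fun i _ => h0 i
    nlinarith

lemma geom_sum_range_le {r : ℝ} (h0 : 0 ≤ r) (h1 : r < 1) (n : ℕ) :
    ∑ i ∈ Finset.range n, r ^ i ≤ (1 - r)⁻¹ := by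
  have hsum : Summable fun i : ℕ => r ^ i := summable_geometric_of_lt_one h0 h1
  calc ∑ i ∈ Finset.range n, r ^ i ≤ ∑' i : ℕ, r ^ i :=
        Summable.sum_le_tsum _ (fun i _ => pow_nonneg h0 i) hsum
    _ = (1 - r)⁻¹ := tsum_geometric_of_lt_one h0 h1

lemma qPoch_abs_le (q z : ℂ) (hq : Complex.abs q < 1) (n : ℕ) :
    Complex.abs (qPoch q z n) ≤ Real.exp (Complex.abs z / (1 - Complex.abs q)) := by
  have hq0 : (0:ℝ) ≤ Complex.abs q := Complex.abs.nonneg q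
  have h1q : (0:ℝ) < 1 - Complex.abs q := by linarith
  unfold qPoch
  rw [map_prod]
  calc ∏ r ∈ Finset.range n, Complex.abs (1 - z * q ^ r)
      ≤ ∏ r ∈ Finset.range n, Real.exp (Complex.abs z * Complex.abs q ^ r) := by
        refine Finset.prod_le_prod (fun i _ => Complex.abs.nonneg _) fun i _ => ?_
        have h2 : Complex.abs (1 - z * q ^ i) ≤ 1 + Complex.abs z * Complex.abs q ^ i := by
          have := norm_sub_le (1:ℂ) (z * q ^ i)
          simpa [Complex.norm_eq_abs, map_mul, map_pow] using this
        refine h2.trans ?_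
        have := Real.add_one_le_exp (Complex.abs z * Complex.abs q ^ i)
        linarith
    _ = Real.exp (∑ r ∈ Finset.range n, Complex.abs z * Complex.abs q ^ r) := by
        rw [Real.exp_sum]
    _ ≤ Real.exp (Complex.abs z / (1 - Complex.abs q)) := by
        apply Real.exp_le_exp.mpr
        rw [← Finset.mul_sum, div_eq_mul_inv]
        exact mul_le_mul_of_nonneg_left (geom_sum_range_le hq0 hq n) (Complex.abs.nonneg z)

lemma qPoch_abs_lower (q z : ℂ) (hq : Complex.abs q < 1)
    (hz : ∀ n, qPoch q z n ≠ 0) :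
    ∃ ε > 0, ∀ n, ε ≤ Complex.abs (qPoch q z n) := by
  have hq0 : (0:ℝ) ≤ Complex.abs q := Complex.abs.nonneg q
  have h1q : (0:ℝ) < 1 - Complex.abs q := by linarith
  -- choose N with |z| * |q|^N / (1-|q|) ≤ 1/2
  obtain ⟨N, hN⟩ : ∃ N : ℕ, Complex.abs z * Complex.abs q ^ N * (1 - Complex.abs q)⁻¹ ≤ 1/2 := by
    have h := tendsto_pow_atTop_nhds_zero_of_lt_one hq0 hq
    have h2 := h.const_mul (Complex.abs z)
    have h3 := h2.mul_const (1 - Complex.abs q)⁻¹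
    rw [mul_zero, zero_mul] at h3
    have := (h3.eventually_le_const (by norm_num : (0:ℝ) < 1/2)).exists
    obtain ⟨N, hN⟩ := this
    exact ⟨N, hN⟩
  have hzqN : Complex.abs z * Complex.abs q ^ N ≤ 1/2 := by
    have h2 : Complex.abs z * Complex.abs q ^ N * 1 ≤
        Complex.abs z * Complex.abs q ^ N * (1 - Complex.abs q)⁻¹ := by
      refine mul_le_mul_of_nonneg_left ?_ (by positivity)
      rw [le_inv_comm₀]
      · linarith
      · norm_num
      · exact h1q
    linarith [h2, hN]
  set f : ℕ → ℝ := fun m => Complex.abs (qPoch q z m) with hf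
  have hne : (Finset.range (N+1)).Nonempty := ⟨0, by simp⟩
  set ε0 : ℝ := (Finset.range (N+1)).inf' hne f with hε0
  have hε0pos : 0 < ε0 := by
    rw [hε0, Finset.lt_inf'_iff]
    intro b _
    exact AbsoluteValue.pos Complex.abs (hz b)
  refine ⟨ε0/2, by linarith, fun n => ?_⟩
  rcases le_or_gt n N with hn | hn
  · have h1 : ε0 ≤ f n := Finset.inf'_le f (by simp [Finset.mem_range]; omega)
    have := AbsoluteValue.nonneg Complex.abs (qPoch q z n)
    simp only [hf] at h1
    linarith
  · obtain ⟨k, rfl⟩ := Nat.exists_eq_add_of_le hn.le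
    have hsplit : qPoch q z (N + k) =
        qPoch q z N * ∏ j ∈ Finset.range k, (1 - z * q ^ (N + j)) := by
      unfold qPoch
      rw [Finset.prod_range_add]
    have habs : Complex.abs (qPoch q z (N + k)) =
        Complex.abs (qPoch q z N) * Complex.abs (∏ j ∈ Finset.range k, (1 - z * q ^ (N + j))) := by
      rw [hsplit, map_mul]
    set t : ℕ → ℝ := fun j => Complex.abs z * Complex.abs q ^ (N + j) with ht
    have ht0 : ∀ j, 0 ≤ t j := fun j => by positivity
    have htle : ∀ j, t j ≤ 1/2 := by
      intro j
      have : Complex.abs q ^ (N + j) ≤ Complex.abs q ^ N :=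
        pow_le_pow_of_le_one hq0 hq.le (by omega)
      calc t j ≤ Complex.abs z * Complex.abs q ^ N :=
            mul_le_mul_of_nonneg_left this (Complex.abs.nonneg z)
        _ ≤ 1/2 := hzqN
    have hts : ∑ j ∈ Finset.range k, t j ≤ 1/2 := by
      have : ∑ j ∈ Finset.range k, t j
          = Complex.abs z * Complex.abs q ^ N * ∑ j ∈ Finset.range k, Complex.abs q ^ j := by
        rw [Finset.mul_sum]
        exact Finset.sum_congr rfl fun j _ => by simp only [ht]; rw [pow_add]; ring
      rw [this]
      calc Complex.abs z * Complex.abs q ^ N * ∑ j ∈ Finset.range k, Complex.abs q ^ j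
          ≤ Complex.abs z * Complex.abs q ^ N * (1 - Complex.abs q)⁻¹ :=
            mul_le_mul_of_nonneg_left (geom_sum_range_le hq0 hq k) (by positivity)
        _ ≤ 1/2 := hN
    have hprod : (1:ℝ)/2 ≤ Complex.abs (∏ j ∈ Finset.range k, (1 - z * q ^ (N + j))) := by
      rw [map_prod]
      have h1 : ∏ j ∈ Finset.range k, (1 - t j)
          ≤ ∏ j ∈ Finset.range k, Complex.abs (1 - z * q ^ (N + j)) := by
        refine Finset.prod_le_prod (fun j _ => by linarith [htle j]) fun j _ => ?_
        have := norm_sub_norm_le (1:ℂ) (z * q ^ (N + j))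
        simp only [Complex.norm_eq_abs, map_one, map_mul, map_pow] at this
        simpa [ht] using this
      have h2 := prod_one_sub_ge t ht0 (fun j => by linarith [htle j]) k
      linarith
    have hN' : ε0 ≤ Complex.abs (qPoch q z N) :=
      Finset.inf'_le f (by simp)
    have habs2 : Complex.abs (qPoch q z N) * (1/2) ≤ Complex.abs (qPoch q z (N + k)) := by
      rw [habs]
      exact mul_le_mul_of_nonneg_left hprod (Complex.abs.nonneg _)
    nlinarith [AbsoluteValue.nonneg Complex.abs (qPoch q z N)]

lemma qPoch_self_ne_zero (q : ℂ) (hq : Complex.abs q < 1) (n : ℕ) : qPoch q q n ≠ 0 := by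
  unfold qPoch
  rw [Finset.prod_ne_zero_iff]
  intro r _ h
  have h1 : q * q ^ r = 1 := by
    have := sub_eq_zero.mp h
    linear_combination -this
  have h2 : Complex.abs (q * q ^ r) < 1 := by
    rw [map_mul, map_pow]
    calc Complex.abs q * Complex.abs q ^ r ≤ Complex.abs q * 1 := by
          refine mul_le_mul_of_nonneg_left ?_ (Complex.abs.nonneg q)
          exact pow_le_one₀ (Complex.abs.nonneg q) hq.le
      _ < 1 := by rw [mul_one]; exact hq
  rw [h1] at h2
  simp at h2

lemma phi1_term_summable (q q1 A B C x y : ℂ)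
    (hq1 : Complex.abs q < 1) (hq11 : Complex.abs q1 < 1)
    (hC : ∀ n, qPoch q C n ≠ 0) (hx : Complex.abs x < 1) (hy : Complex.abs y < 1) :
    Summable (fun p : ℕ × ℕ =>
      qPoch q A (p.1 + p.2) * qPoch q1 B p.1 /
        (qPoch q C (p.1 + p.2) * qPoch q1 q1 p.1 * qPoch q q p.2) * x ^ p.1 * y ^ p.2) := by
  obtain ⟨e1, he1, hb1⟩ := qPoch_abs_lower q C hq1 hC
  obtain ⟨e2, he2, hb2⟩ := qPoch_abs_lower q1 q1 hq11 (qPoch_self_ne_zero q1 hq11)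
  obtain ⟨e3, he3, hb3⟩ := qPoch_abs_lower q q hq1 (qPoch_self_ne_zero q hq1)
  set MA := Real.exp (Complex.abs A / (1 - Complex.abs q)) with hMA
  set MB := Real.exp (Complex.abs B / (1 - Complex.abs q1)) with hMB
  have hMA0 : 0 < MA := Real.exp_pos _
  have hMB0 : 0 < MB := Real.exp_pos _
  set K := MA * MB / (e1 * e2 * e3) with hK
  have hK0 : 0 ≤ K := by positivity
  apply Summable.of_norm_bounded (g := fun p : ℕ × ℕ => K * (Complex.abs x ^ p.1 * Complex.abs y ^ p.2))
  · exact (Summable.mul_of_nonneg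
      (summable_geometric_of_lt_one (Complex.abs.nonneg x) hx)
      (summable_geometric_of_lt_one (Complex.abs.nonneg y) hy)
      (fun i => pow_nonneg (Complex.abs.nonneg x) i)
      (fun i => pow_nonneg (Complex.abs.nonneg y) i)).mul_left K
  · intro p
    rw [Complex.norm_eq_abs, map_mul, map_mul, map_div₀, map_mul, map_mul, map_mul,
      map_pow, map_pow]
    have hden : e1 * e2 * e3 ≤
        Complex.abs (qPoch q C (p.1 + p.2)) * Complex.abs (qPoch q1 q1 p.1) *
          Complex.abs (qPoch q q p.2) := by
      have h12 : e1 * e2 ≤ Complex.abs (qPoch q C (p.1 + p.2)) * Complex.abs (qPoch q1 q1 p.1) :=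
        mul_le_mul (hb1 _) (hb2 _) he2.le (Complex.abs.nonneg _)
      exact mul_le_mul h12 (hb3 _) he3.le (by positivity)
    have hnum : Complex.abs (qPoch q A (p.1 + p.2)) * Complex.abs (qPoch q1 B p.1) ≤ MA * MB := by
      have h1 := qPoch_abs_le q A hq1 (p.1 + p.2)
      have h2 := qPoch_abs_le q1 B hq11 p.1
      have := Complex.abs.nonneg (qPoch q A (p.1 + p.2))
      have := Complex.abs.nonneg (qPoch q1 B p.1)
      nlinarith
    have hdiv : Complex.abs (qPoch q A (p.1 + p.2)) * Complex.abs (qPoch q1 B p.1) /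
        (Complex.abs (qPoch q C (p.1 + p.2)) * Complex.abs (qPoch q1 q1 p.1) *
          Complex.abs (qPoch q q p.2)) ≤ K := by
      rw [hK]
      exact div_le_div₀ (by positivity) hnum (by positivity) hden
    calc Complex.abs (qPoch q A (p.1 + p.2)) * Complex.abs (qPoch q1 B p.1) /
          (Complex.abs (qPoch q C (p.1 + p.2)) * Complex.abs (qPoch q1 q1 p.1) *
            Complex.abs (qPoch q q p.2)) * Complex.abs x ^ p.1 * Complex.abs y ^ p.2
        ≤ K * Complex.abs x ^ p.1 * Complex.abs y ^ p.2 := by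
          have hxn : (0:ℝ) ≤ Complex.abs x ^ p.1 := by positivity
          have hyn : (0:ℝ) ≤ Complex.abs y ^ p.2 := by positivity
          exact mul_le_mul_of_nonneg_right (mul_le_mul_of_nonneg_right hdiv hxn) hyn
      _ = K * (Complex.abs x ^ p.1 * Complex.abs y ^ p.2) := by ring

lemma term_id (A C P Pq Q Qq g1 g2 b X Y s : ℂ)
    (hQ : Q ≠ 0) (hQq : Qq ≠ 0) (hg1 : g1 ≠ 0) (hg2 : g2 ≠ 0) (hC0 : C ≠ 0)
    (h1C : (1 : ℂ) - C ≠ 0)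
    (e1 : (1 - A) * Pq = P * (1 - A * s)) (e2 : (1 - C) * Qq = Q * (1 - C * s)) :
    (1 - A) * (Pq * b / (Qq * g1 * g2) * X * Y) =
      (1 - A / C) * (P * b / (Qq * g1 * g2) * X * Y)
        + (A / C) * (1 - C) * (P * b / (Q * g1 * g2) * X * Y) := by
  have h3 : (1 - C) / Q = (1 - C * s) / Qq := by
    rw [div_eq_div_iff hQ hQq]
    linear_combination e2
  have step : (1 - A) * (Pq * b / (Qq * g1 * g2) * X * Y) =
      (1 - A) * Pq * b / (Qq * g1 * g2) * X * Y := by ring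
  have step3 : (A / C) * (1 - C) * (P * b / (Q * g1 * g2) * X * Y) =
      (A / C) * ((1 - C) / Q) * (P * b / (g1 * g2) * X * Y) := by ring
  rw [step, e1, step3, h3]
  simp only [div_eq_mul_inv, mul_inv_rev]
  linear_combination (A * s * P * b * X * Y * g1⁻¹ * g2⁻¹ * Qq⁻¹) * (mul_inv_cancel₀ hC0)

/-- The bibasic Humbert hypergeometric function Φ₁ on two independent bases q and q₁. -/
noncomputable def Phi1 (q q1 A B C x y : ℂ) : ℂ :=
  ∑' p : ℕ × ℕ,
    qPoch q A (p.1 + p.2) * qPoch q1 B p.1 /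
      (qPoch q C (p.1 + p.2) * qPoch q1 q1 p.1 * qPoch q q p.2) * x ^ p.1 * y ^ p.2

/-- The Jackson p-derivative. -/
noncomputable def jackson (p : ℂ) (f : ℂ → ℂ) (x : ℂ) : ℂ :=
  (f x - f (p * x)) / ((1 - p) * x)

theorem stmt4 (q q1 A B C x y : ℂ)
    (hq0 : 0 < ‖q‖) (hq1 : ‖q‖ < 1)
    (hq10 : 0 < ‖q1‖) (hq11 : ‖q1‖ < 1)
    (hC : ∀ n : ℕ, qPoch q C n ≠ 0)
    (hC0 : C ≠ 0) (hx : ‖x‖ < 1) (hy : ‖y‖ < 1) :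
    (1 - A) * Phi1 q q1 (q * A) B (q * C) x y =
      (1 - A / C) * Phi1 q q1 A B (q * C) x y
        + (A / C) * (1 - C) * Phi1 q q1 A B C x y := by
  have h1C : (1 - C) ≠ 0 := by
    have := hC 1
    unfold qPoch at this
    simpa using this
  have hCq : ∀ n, qPoch q (q * C) n ≠ 0 := by
    intro n h
    exact hC (n + 1) (by rw [qPoch_shift, h, mul_zero])
  set t1 : ℕ × ℕ → ℂ := fun p =>
    qPoch q (q * A) (p.1 + p.2) * qPoch q1 B p.1 /
      (qPoch q (q * C) (p.1 + p.2) * qPoch q1 q1 p.1 * qPoch q q p.2) * x ^ p.1 * y ^ p.2 with ht1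
  set t2 : ℕ × ℕ → ℂ := fun p =>
    qPoch q A (p.1 + p.2) * qPoch q1 B p.1 /
      (qPoch q (q * C) (p.1 + p.2) * qPoch q1 q1 p.1 * qPoch q q p.2) * x ^ p.1 * y ^ p.2 with ht2
  set t3 : ℕ × ℕ → ℂ := fun p =>
    qPoch q A (p.1 + p.2) * qPoch q1 B p.1 /
      (qPoch q C (p.1 + p.2) * qPoch q1 q1 p.1 * qPoch q q p.2) * x ^ p.1 * y ^ p.2 with ht3
  have h2 : Summable t2 := phi1_term_summable q q1 A B (q * C) x y hq1 hq11 hCq hx hy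
  have h3 : Summable t3 := phi1_term_summable q q1 A B C x y hq1 hq11 hC hx hy
  have key : ∀ p : ℕ × ℕ, (1 - A) * t1 p =
      (1 - A / C) * t2 p + (A / C) * (1 - C) * t3 p := by
    intro p
    set n := p.1 + p.2 with hn
    have e1 : (1 - A) * qPoch q (q * A) n = qPoch q A n * (1 - A * q ^ n) := by
      rw [← qPoch_shift, qPoch_succ]
    have e2 : (1 - C) * qPoch q (q * C) n = qPoch q C n * (1 - C * q ^ n) := by
      rw [← qPoch_shift, qPoch_succ]
    have hQ : qPoch q C n ≠ 0 := hC n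
    have hQq : qPoch q (q * C) n ≠ 0 := hCq n
    have hG1 : qPoch q1 q1 p.1 ≠ 0 := qPoch_self_ne_zero q1 hq11 p.1
    have hG2 : qPoch q q p.2 ≠ 0 := qPoch_self_ne_zero q hq1 p.2
    simp only [ht1, ht2, ht3]
    exact term_id A C (qPoch q A n) (qPoch q (q * A) n) (qPoch q C n) (qPoch q (q * C) n)
      (qPoch q1 q1 p.1) (qPoch q q p.2) (qPoch q1 B p.1) (x ^ p.1) (y ^ p.2) (q ^ n)
      hQ hQq hG1 hG2 hC0 h1C e1 e2
  have lhs : Phi1 q q1 (q * A) B (q * C) x y = ∑' p, t1 p := rfl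
  have rhs1 : Phi1 q q1 A B (q * C) x y = ∑' p, t2 p := rfl
  have rhs2 : Phi1 q q1 A B C x y = ∑' p, t3 p := rfl
  rw [lhs, rhs1, rhs2]
  calc (1 - A) * ∑' p, t1 p = ∑' p, (1 - A) * t1 p := (tsum_mul_left).symm
    _ = ∑' p, ((1 - A / C) * t2 p + (A / C) * (1 - C) * t3 p) := tsum_congr key
    _ = (∑' p, (1 - A / C) * t2 p) + ∑' p, (A / C) * (1 - C) * t3 p :=
        Summable.tsum_add (h2.mul_left _) (h3.mul_left _)
    _ = (1 - A / C) * (∑' p, t2 p) + (A / C) * (1 - C) * ∑' p, t3 p := by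
        rw [tsum_mul_left, tsum_mul_left]
end

section
/- For all parameters A, B, C ∈ ℂ with C ≠ 1 and (C;q)_n ≠ 0 for all n, and all x, y ∈ ℂ with |x| < 1 and |y| < 1, the bibasic Humbert function satisfies Φ₁(A,q₁B;C;q,q₁;x,y) = Φ₁(A,B;C;q,q₁;x,y) + (xB(1−A)/(1−C))·Φ₁(qA,q₁B;qC;q,q₁;x,y). (Equation (2.11).) -/
open Complex

namespace Stmt10Aux

lemma qPoch_succ (q z : ℂ) (n : ℕ) :
    qPoch q z (n + 1) = qPoch q z n * (1 - z * q ^ n) :=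
  Finset.prod_range_succ _ _

lemma qPoch_succ' (q z : ℂ) (n : ℕ) :
    qPoch q z (n + 1) = (1 - z) * qPoch q (q * z) n := by
  unfold qPoch
  rw [Finset.prod_range_succ']
  simp only [pow_zero, mul_one]
  rw [mul_comm]
  congr 1
  refine Finset.prod_congr rfl fun r _ => ?_
  ring

lemma qPoch_abs_le (q z : ℂ) (hq : ‖q‖ < 1) (n : ℕ) :
    ‖qPoch q z n‖ ≤ Real.exp (‖z‖ / (1 - ‖q‖)) := by
  have hq0 : (0 : ℝ) ≤ ‖q‖ := norm_nonneg _
  have h1q : (0 : ℝ) < 1 - ‖q‖ := by linarith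
  have habs : ‖qPoch q z n‖
      = ∏ r ∈ Finset.range n, ‖1 - z * q ^ r‖ := by
    simpa [qPoch] using norm_prod (Finset.range n) (fun r => 1 - z * q ^ r)
  rw [habs]
  calc ∏ r ∈ Finset.range n, ‖1 - z * q ^ r‖
      ≤ ∏ r ∈ Finset.range n, Real.exp (‖z‖ * ‖q‖ ^ r) := by
        apply Finset.prod_le_prod (fun r _ => norm_nonneg _)
        intro r _
        have h1 : ‖1 - z * q ^ r‖ ≤ 1 + ‖z‖ * ‖q‖ ^ r := by
          have := norm_add_le 1 (-(z * q ^ r))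
          simpa [sub_eq_add_neg, norm_mul, norm_pow] using this
        have h2 := Real.add_one_le_exp (‖z‖ * ‖q‖ ^ r)
        linarith
    _ = Real.exp (∑ r ∈ Finset.range n, ‖z‖ * ‖q‖ ^ r) :=
        (Real.exp_sum _ _).symm
    _ ≤ Real.exp (‖z‖ / (1 - ‖q‖)) := by
        apply Real.exp_le_exp.2
        rw [← Finset.mul_sum, div_eq_mul_inv]
        apply mul_le_mul_of_nonneg_left _ (norm_nonneg z)
        have hsum : Summable fun r : ℕ => ‖q‖ ^ r :=
          summable_geometric_of_lt_one hq0 hq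
        calc ∑ r ∈ Finset.range n, ‖q‖ ^ r
            ≤ ∑' r : ℕ, ‖q‖ ^ r :=
              Summable.sum_le_tsum _ (fun i _ => pow_nonneg hq0 i) hsum
          _ = (1 - ‖q‖)⁻¹ := tsum_geometric_of_lt_one hq0 hq

lemma one_sub_sum_le_prod (s : Finset ℕ) (f : ℕ → ℝ) (h0 : ∀ i ∈ s, 0 ≤ f i)
    (h1 : ∀ i ∈ s, f i ≤ 1) :
    1 - ∑ i ∈ s, f i ≤ ∏ i ∈ s, (1 - f i) := by
  classical
  induction s using Finset.induction with
  | empty => simp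
  | @insert a s ha ih =>
    rw [Finset.prod_insert ha, Finset.sum_insert ha]
    have h0a : 0 ≤ f a := h0 a (Finset.mem_insert_self a s)
    have h1a : f a ≤ 1 := h1 a (Finset.mem_insert_self a s)
    have ih' := ih (fun i hi => h0 i (Finset.mem_insert_of_mem hi))
      (fun i hi => h1 i (Finset.mem_insert_of_mem hi))
    have hs0 : 0 ≤ ∑ i ∈ s, f i :=
      Finset.sum_nonneg fun i hi => h0 i (Finset.mem_insert_of_mem hi)
    nlinarith [mul_le_mul_of_nonneg_left ih' (by linarith : (0:ℝ) ≤ 1 - f a)]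

lemma qPoch_abs_lower (q z : ℂ) (hq : ‖q‖ < 1)
    (hz : ∀ n, qPoch q z n ≠ 0) :
    ∃ c : ℝ, 0 < c ∧ ∀ n, c ≤ ‖qPoch q z n‖ := by
  have hq0 : (0 : ℝ) ≤ ‖q‖ := norm_nonneg _
  have h1q : (0 : ℝ) < 1 - ‖q‖ := by linarith
  -- choose N so that the tail is small
  have hε : (0 : ℝ) < (1 - ‖q‖) / (2 * (‖z‖ + 1)) := by
    apply div_pos h1q
    positivity
  obtain ⟨N, hN⟩ := (Filter.eventually_atTop).1
    ((tendsto_pow_atTop_nhds_zero_of_lt_one hq0 hq).eventually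
      (gt_mem_nhds hε))
  have hqN : ‖q‖ ^ N < (1 - ‖q‖) / (2 * (‖z‖ + 1)) :=
    hN N le_rfl
  -- tail sum bound
  have htail : ∀ m : ℕ,
      ∑ i ∈ Finset.range m, ‖z‖ * ‖q‖ ^ (N + i) ≤ 1 / 2 := by
    intro m
    have hsum : Summable fun r : ℕ => ‖q‖ ^ r :=
      summable_geometric_of_lt_one hq0 hq
    have h1 : ∑ i ∈ Finset.range m, ‖z‖ * ‖q‖ ^ (N + i)
        = ‖z‖ * ‖q‖ ^ N * ∑ i ∈ Finset.range m, ‖q‖ ^ i := by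
      rw [Finset.mul_sum]
      refine Finset.sum_congr rfl fun i _ => ?_
      rw [pow_add]; ring
    rw [h1]
    have h2 : ∑ i ∈ Finset.range m, ‖q‖ ^ i ≤ (1 - ‖q‖)⁻¹ := by
      calc ∑ i ∈ Finset.range m, ‖q‖ ^ i
          ≤ ∑' r : ℕ, ‖q‖ ^ r :=
            Summable.sum_le_tsum _ (fun i _ => pow_nonneg hq0 i) hsum
        _ = (1 - ‖q‖)⁻¹ := tsum_geometric_of_lt_one hq0 hq
    have h3 : ‖z‖ * ‖q‖ ^ N ≤ (1 - ‖q‖) / 2 := by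
      have hz1 : ‖z‖ ≤ ‖z‖ + 1 := by linarith
      have := mul_le_mul_of_nonneg_left hqN.le (norm_nonneg z)
      calc ‖z‖ * ‖q‖ ^ N
          ≤ ‖z‖ * ((1 - ‖q‖) / (2 * (‖z‖ + 1))) := this
        _ ≤ (‖z‖ + 1) * ((1 - ‖q‖) / (2 * (‖z‖ + 1))) := by
            apply mul_le_mul_of_nonneg_right hz1 (le_of_lt hε)
        _ = (1 - ‖q‖) / 2 := by
            field_simp
    calc ‖z‖ * ‖q‖ ^ N * ∑ i ∈ Finset.range m, ‖q‖ ^ i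
        ≤ ((1 - ‖q‖) / 2) * (1 - ‖q‖)⁻¹ := by
          apply mul_le_mul h3 h2 (Finset.sum_nonneg fun i _ => pow_nonneg hq0 i)
          linarith
      _ = 1 / 2 := by
          field_simp
  -- minimum of the first N+1 values
  set T : Finset ℝ := (Finset.range (N + 1)).image (fun n => ‖qPoch q z n‖)
    with hT
  have hTne : T.Nonempty := ⟨‖qPoch q z 0‖,
    Finset.mem_image.2 ⟨0, Finset.mem_range.2 (Nat.succ_pos N), rfl⟩⟩
  set c0 : ℝ := T.min' hTne with hc0
  have hc0pos : 0 < c0 := by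
    obtain ⟨n, _, hn⟩ := Finset.mem_image.1 (T.min'_mem hTne)
    rw [hc0, ← hn]
    exact (norm_pos_iff.mpr (hz n))
  have hc0le : ∀ n ≤ N, c0 ≤ ‖qPoch q z n‖ := by
    intro n hn
    apply Finset.min'_le
    exact Finset.mem_image.2 ⟨n, Finset.mem_range.2 (Nat.lt_succ_of_le hn), rfl⟩
  refine ⟨c0 / 2, by linarith, fun n => ?_⟩
  rcases le_or_gt n N with h | h
  · have := hc0le n h
    linarith
  · obtain ⟨m, rfl⟩ : ∃ m, n = N + m := ⟨n - N, by omega⟩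
    have hsplit : qPoch q z (N + m)
        = qPoch q z N * ∏ i ∈ Finset.range m, (1 - z * q ^ (N + i)) := by
      unfold qPoch
      exact Finset.prod_range_add _ N m
    rw [hsplit, norm_mul]
    have hterm_le : ∀ i ∈ Finset.range m,
        ‖z‖ * ‖q‖ ^ (N + i) ≤ 1 := by
      intro i hi
      have h1 := htail m
      have h2 : ‖z‖ * ‖q‖ ^ (N + i)
          ≤ ∑ j ∈ Finset.range m, ‖z‖ * ‖q‖ ^ (N + j) :=
        Finset.single_le_sum (f := fun j => ‖z‖ * ‖q‖ ^ (N + j))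
          (fun j _ => by positivity) hi
      linarith
    have hprod : (1 : ℝ) / 2 ≤ ‖∏ i ∈ Finset.range m, (1 - z * q ^ (N + i))‖ := by
      have habs : ‖∏ i ∈ Finset.range m, (1 - z * q ^ (N + i))‖
          = ∏ i ∈ Finset.range m, ‖1 - z * q ^ (N + i)‖ :=
        norm_prod _ _
      rw [habs]
      have hstep : ∏ i ∈ Finset.range m, (1 - ‖z‖ * ‖q‖ ^ (N + i))
          ≤ ∏ i ∈ Finset.range m, ‖1 - z * q ^ (N + i)‖ := by
        apply Finset.prod_le_prod
        · intro i hi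
          have := hterm_le i hi
          linarith
        · intro i hi
          have h1 : (1 : ℝ) = ‖(1 : ℂ)‖ := by simp
          have h2 := norm_add_le (1 - z * q ^ (N + i)) (z * q ^ (N + i))
          simp only [sub_add_cancel] at h2
          have h3 : ‖z * q ^ (N + i)‖
              = ‖z‖ * ‖q‖ ^ (N + i) := by
            rw [norm_mul, norm_pow]
          simp only [norm_one] at h2
          linarith [h2, h3 ▸ h2]
      have hweier := one_sub_sum_le_prod (Finset.range m)
        (fun i => ‖z‖ * ‖q‖ ^ (N + i))
        (fun i _ => by positivity) hterm_le
      have := htail m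
      linarith
    have hNval := hc0le N le_rfl
    calc c0 / 2 ≤ ‖qPoch q z N‖ * (1 / 2) := by linarith
      _ ≤ ‖qPoch q z N‖
            * ‖∏ i ∈ Finset.range m, (1 - z * q ^ (N + i))‖ := by
          apply mul_le_mul_of_nonneg_left hprod (norm_nonneg _)

lemma qPoch_self_ne_zero (q : ℂ) (hq : ‖q‖ < 1) (n : ℕ) :
    qPoch q q n ≠ 0 := by
  unfold qPoch
  rw [Finset.prod_ne_zero_iff]
  intro r _
  intro h
  have h1 : q * q ^ r = 1 := by linear_combination -h
  have h2 : ‖q * q ^ r‖ = 1 := by rw [h1]; simp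
  have h3 : ‖q‖ * ‖q‖ ^ r ≤ ‖q‖ * 1 :=
    mul_le_mul_of_nonneg_left (pow_le_one₀ (norm_nonneg q) hq.le)
      (norm_nonneg q)
  rw [norm_mul, norm_pow] at h2
  rw [h2] at h3
  simp only [mul_one] at h3
  linarith

lemma phi_summable (q q1 A B C x y : ℂ) (hq : ‖q‖ < 1)
    (hq1 : ‖q1‖ < 1)
    (hC : ∀ n, qPoch q C n ≠ 0) (hx : ‖x‖ < 1) (hy : ‖y‖ < 1) :
    Summable (fun p : ℕ × ℕ =>
      qPoch q A (p.1 + p.2) * qPoch q1 B p.1 /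
        (qPoch q C (p.1 + p.2) * qPoch q1 q1 p.1 * qPoch q q p.2) * x ^ p.1 * y ^ p.2) := by
  obtain ⟨cC, hcC0, hcC⟩ := qPoch_abs_lower q C hq hC
  obtain ⟨c1, hc10, hc1⟩ := qPoch_abs_lower q1 q1 hq1 (qPoch_self_ne_zero q1 hq1)
  obtain ⟨cq, hcq0, hcq⟩ := qPoch_abs_lower q q hq (qPoch_self_ne_zero q hq)
  set MA : ℝ := Real.exp (‖A‖ / (1 - ‖q‖)) with hMA
  set MB : ℝ := Real.exp (‖B‖ / (1 - ‖q1‖)) with hMB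
  have hMA0 : 0 < MA := Real.exp_pos _
  have hMB0 : 0 < MB := Real.exp_pos _
  set K : ℝ := MA * MB / (cC * c1 * cq) with hK
  have hmaj : Summable (fun p : ℕ × ℕ =>
      K * (‖x‖ ^ p.1 * ‖y‖ ^ p.2)) := by
    apply Summable.mul_left
    exact Summable.mul_of_nonneg
      (summable_geometric_of_lt_one (norm_nonneg x) hx)
      (summable_geometric_of_lt_one (norm_nonneg y) hy)
      (fun ℓ => pow_nonneg (norm_nonneg x) ℓ)
      (fun k => pow_nonneg (norm_nonneg y) k)
  apply Summable.of_norm_bounded hmaj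
  rintro ⟨ℓ, k⟩
  simp only [norm_mul, norm_div, norm_pow]
  have hnum : ‖qPoch q A (ℓ + k)‖ * ‖qPoch q1 B ℓ‖ ≤ MA * MB :=
    mul_le_mul (qPoch_abs_le q A hq _) (qPoch_abs_le q1 B hq1 _)
      (norm_nonneg _) hMA0.le
  have hden : cC * c1 * cq ≤ ‖qPoch q C (ℓ + k)‖
      * ‖qPoch q1 q1 ℓ‖ * ‖qPoch q q k‖ := by
    apply mul_le_mul
    apply mul_le_mul (hcC _) (hc1 _) hc10.le (norm_nonneg _)
    exact hcq _
    exact hcq0.le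
    positivity
  have hdenpos : 0 < cC * c1 * cq := by positivity
  have hfrac : ‖qPoch q A (ℓ + k)‖ * ‖qPoch q1 B ℓ‖ /
      (‖qPoch q C (ℓ + k)‖ * ‖qPoch q1 q1 ℓ‖
        * ‖qPoch q q k‖) ≤ K := by
    rw [hK]
    apply div_le_div₀ (by positivity) hnum hdenpos hden
  calc ‖qPoch q A (ℓ + k)‖ * ‖qPoch q1 B ℓ‖ /
        (‖qPoch q C (ℓ + k)‖ * ‖qPoch q1 q1 ℓ‖
          * ‖qPoch q q k‖) * ‖x‖ ^ ℓ * ‖y‖ ^ k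
      ≤ K * ‖x‖ ^ ℓ * ‖y‖ ^ k := by
        apply mul_le_mul_of_nonneg_right _ (pow_nonneg (norm_nonneg y) k)
        apply mul_le_mul_of_nonneg_right hfrac (pow_nonneg (norm_nonneg x) ℓ)
    _ = K * (‖x‖ ^ ℓ * ‖y‖ ^ k) := by ring

lemma alg (A B C t PA PB PC P1 Pq x X Y : ℂ) (hC : 1 - C ≠ 0) (hPC : PC ≠ 0)
    (hP1 : P1 ≠ 0) (ht : 1 - t ≠ 0) (hPq : Pq ≠ 0) :
    (1 - A) * PA * (PB * (1 - B * t)) / ((1 - C) * PC * (P1 * (1 - t)) * Pq) * (x * X) * Y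
    = (1 - A) * PA * ((1 - B) * PB) / ((1 - C) * PC * (P1 * (1 - t)) * Pq) * (x * X) * Y
      + (x * B * (1 - A) / (1 - C)) * (PA * PB / (PC * P1 * Pq) * X * Y) := by
  have h1 := mul_inv_cancel₀ ht
  simp only [div_eq_mul_inv, mul_inv]
  linear_combination ((1 - A) * PA * PB * x * X * Y * B * (1 - C)⁻¹ * PC⁻¹ * P1⁻¹ * Pq⁻¹) * h1

lemma key (q q1 A B C x y : ℂ) (m k : ℕ)
    (hq : ‖q‖ < 1) (hq1 : ‖q1‖ < 1)
    (hC : ∀ n, qPoch q C n ≠ 0) (hC1 : C ≠ 1) :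
    qPoch q A (m + 1 + k) * qPoch q1 (q1 * B) (m + 1) /
      (qPoch q C (m + 1 + k) * qPoch q1 q1 (m + 1) * qPoch q q k) * x ^ (m + 1) * y ^ k
    = qPoch q A (m + 1 + k) * qPoch q1 B (m + 1) /
      (qPoch q C (m + 1 + k) * qPoch q1 q1 (m + 1) * qPoch q q k) * x ^ (m + 1) * y ^ k
      + (x * B * (1 - A) / (1 - C)) *
        (qPoch q (q * A) (m + k) * qPoch q1 (q1 * B) m /
          (qPoch q (q * C) (m + k) * qPoch q1 q1 m * qPoch q q k) * x ^ m * y ^ k) := by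
  have e1 : qPoch q A (m + 1 + k) = (1 - A) * qPoch q (q * A) (m + k) := by
    rw [show m + 1 + k = (m + k) + 1 by ring, qPoch_succ']
  have e2 : qPoch q C (m + 1 + k) = (1 - C) * qPoch q (q * C) (m + k) := by
    rw [show m + 1 + k = (m + k) + 1 by ring, qPoch_succ']
  have e3 : qPoch q1 B (m + 1) = (1 - B) * qPoch q1 (q1 * B) m := qPoch_succ' _ _ _
  have e4 : qPoch q1 (q1 * B) (m + 1)
      = qPoch q1 (q1 * B) m * (1 - (q1 * B) * q1 ^ m) := qPoch_succ _ _ _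
  have e5 : qPoch q1 q1 (m + 1) = qPoch q1 q1 m * (1 - q1 * q1 ^ m) := qPoch_succ _ _ _
  have h1C : (1 : ℂ) - C ≠ 0 := sub_ne_zero.2 (Ne.symm hC1)
  have hPC : qPoch q (q * C) (m + k) ≠ 0 := by
    have h := hC (m + 1 + k)
    rw [e2] at h
    exact right_ne_zero_of_mul h
  have hP1 : qPoch q1 q1 m ≠ 0 := qPoch_self_ne_zero q1 hq1 m
  have hq1m : (1 : ℂ) - q1 * q1 ^ m ≠ 0 := by
    have h := qPoch_self_ne_zero q1 hq1 (m + 1)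
    rw [e5] at h
    exact right_ne_zero_of_mul h
  have hPq : qPoch q q k ≠ 0 := qPoch_self_ne_zero q hq k
  have e4' : qPoch q1 (q1 * B) (m + 1)
      = qPoch q1 (q1 * B) m * (1 - B * (q1 * q1 ^ m)) := by rw [e4]; ring
  have ex : x ^ (m + 1) = x * x ^ m := by ring
  rw [e1, e2, e3, e4', e5, ex]
  exact alg A B C (q1 * q1 ^ m) (qPoch q (q * A) (m + k)) (qPoch q1 (q1 * B) m)
    (qPoch q (q * C) (m + k)) (qPoch q1 q1 m) (qPoch q q k) x (x ^ m) (y ^ k)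
    h1C hPC hP1 hq1m hPq

end Stmt10Aux

theorem stmt10 (q q1 A B C x y : ℂ)
    (hq0 : 0 < ‖q‖) (hq1 : ‖q‖ < 1)
    (hq10 : 0 < ‖q1‖) (hq11 : ‖q1‖ < 1)
    (hC : ∀ n : ℕ, qPoch q C n ≠ 0)
    (hC1 : C ≠ 1) (hx : ‖x‖ < 1) (hy : ‖y‖ < 1) :
    Phi1 q q1 A (q1 * B) C x y =
      Phi1 q q1 A B C x y
        + (x * B * (1 - A) / (1 - C)) * Phi1 q q1 (q * A) (q1 * B) (q * C) x y := by
  classical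
  set F : ℕ × ℕ → ℂ := fun p =>
    qPoch q A (p.1 + p.2) * qPoch q1 B p.1 /
      (qPoch q C (p.1 + p.2) * qPoch q1 q1 p.1 * qPoch q q p.2) * x ^ p.1 * y ^ p.2
    with hFdef
  set G : ℕ × ℕ → ℂ := fun p =>
    qPoch q A (p.1 + p.2) * qPoch q1 (q1 * B) p.1 /
      (qPoch q C (p.1 + p.2) * qPoch q1 q1 p.1 * qPoch q q p.2) * x ^ p.1 * y ^ p.2
    with hGdef
  set H : ℕ × ℕ → ℂ := fun p =>
    qPoch q (q * A) (p.1 + p.2) * qPoch q1 (q1 * B) p.1 /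
      (qPoch q (q * C) (p.1 + p.2) * qPoch q1 q1 p.1 * qPoch q q p.2) * x ^ p.1 * y ^ p.2
    with hHdef
  set c : ℂ := x * B * (1 - A) / (1 - C) with hcdef
  set S : ℕ × ℕ → ℂ := fun p => if p.1 = 0 then 0 else c * H (p.1 - 1, p.2) with hSdef
  have hqC : ∀ n, qPoch q (q * C) n ≠ 0 := by
    intro n
    have h := hC (n + 1)
    rw [Stmt10Aux.qPoch_succ'] at h
    exact right_ne_zero_of_mul h
  -- pointwise identity
  have hGFS : ∀ p : ℕ × ℕ, G p = F p + S p := by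
    rintro ⟨ℓ, k⟩
    cases ℓ with
    | zero => simp [hFdef, hGdef, hSdef, qPoch]
    | succ m =>
      have hk := Stmt10Aux.key q q1 A B C x y m k hq1 hq11 hC hC1
      simp only [hFdef, hGdef, hSdef, hHdef, hcdef]
      simpa using hk
  -- summability
  have hF : Summable F := Stmt10Aux.phi_summable q q1 A B C x y hq1 hq11 hC hx hy
  have hH : Summable H :=
    Stmt10Aux.phi_summable q q1 (q * A) (q1 * B) (q * C) x y hq1 hq11 hqC hx hy
  have he : Function.Injective (fun p : ℕ × ℕ => (p.1 + 1, p.2)) := by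
    rintro ⟨a, b⟩ ⟨a', b'⟩ h
    simp only [Prod.mk.injEq] at h
    exact Prod.ext (by omega) h.2
  have hSe : (S ∘ fun p : ℕ × ℕ => (p.1 + 1, p.2)) = fun p => c * H p := by
    funext p
    simp [hSdef]
  have hSvanish : ∀ p : ℕ × ℕ, p ∉ Set.range (fun p : ℕ × ℕ => (p.1 + 1, p.2)) → S p = 0 := by
    rintro ⟨ℓ, k⟩ hp
    cases ℓ with
    | zero => simp [hSdef]
    | succ m => exact absurd ⟨(m, k), rfl⟩ hp
  have hS : Summable S := by
    have h1 : Summable (S ∘ fun p : ℕ × ℕ => (p.1 + 1, p.2)) := by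
      rw [hSe]
      exact hH.mul_left c
    exact (he.summable_iff hSvanish).1 h1
  have htsumS : ∑' p, S p = c * ∑' p, H p := by
    have hsupp : Function.support S ⊆ Set.range (fun p : ℕ × ℕ => (p.1 + 1, p.2)) := by
      intro p hp
      by_contra hnot
      exact hp (hSvanish p hnot)
    have h2 : ∑' p : ℕ × ℕ, S (p.1 + 1, p.2) = c * ∑' p, H p := by
      have h3 : ∀ p : ℕ × ℕ, S (p.1 + 1, p.2) = c * H p := by
        rintro ⟨a, b⟩
        simp [hSdef]
      rw [tsum_congr h3]
      exact tsum_mul_left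
    rw [← h2]
    exact (he.tsum_eq hsupp).symm
  have hPhiG : Phi1 q q1 A (q1 * B) C x y = ∑' p, G p := rfl
  have hPhiF : Phi1 q q1 A B C x y = ∑' p, F p := rfl
  have hPhiH : Phi1 q q1 (q * A) (q1 * B) (q * C) x y = ∑' p, H p := rfl
  rw [hPhiG, hPhiF, hPhiH]
  calc ∑' p, G p = ∑' p, (F p + S p) := by
        exact tsum_congr hGFS
    _ = ∑' p, F p + ∑' p, S p := Summable.tsum_add hF hS
    _ = ∑' p, F p + c * ∑' p, H p := by rw [htsumS]
end
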